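/- Let n ≥ 1, let j₁, …, j_n ∈ {−m, …, m} and let k, ℓ ∈ {−m, …, m} with |k − ℓ| = 1. Then G_{j₁⋯j_n k} ∩ G_{j₁⋯j_n ℓ} is a nondegenerate line segment (i.e. equals the closed segment [u, v] between two distinct points u, v ∈ ℝ²) if and only if |ε| < p^{n+1}. -/

import Mathlib

noncomputable section

/-- `b_j = ε` if `j` is odd and `b_j = 0` if `j` is even. -/
def bshift (ε : ℝ) (j : ℤ) : ℝ := if Odd j then ε else 0

/-- The self-similar set `T_ε` associated with `p = 2m+1` and the shift `ε`. -/
def Tset (p : ℤ) (m : ℕ) (ε : ℝ) : Set (ℝ × ℝ) :=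
  { z | ∃ i j : ℕ → ℤ, (∀ k, |i k| ≤ (m : ℤ)) ∧ (∀ k, |j k| ≤ (m : ℤ)) ∧
      z.1 = ∑' k : ℕ, ((p : ℝ) ^ (k + 1))⁻¹ * ((i k : ℝ) + bshift ε (j k)) ∧
      z.2 = ∑' k : ℕ, ((p : ℝ) ^ (k + 1))⁻¹ * (j k : ℝ) }

/-- The map `f_{i,j}(x, y) = ((x + i + b_j)/p, (y + j)/p)`. -/
def fmap (p : ℤ) (ε : ℝ) (i j : ℤ) (z : ℝ × ℝ) : ℝ × ℝ :=
  ((z.1 + (i : ℝ) + bshift ε j) / (p : ℝ), (z.2 + (j : ℝ)) / (p : ℝ))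

/-- For a word `j₁ ⋯ j_n` (a list of integers in `{-m, …, m}`),
`G_{j₁⋯j_n} = ⋃_{i₁,…,i_n ∈ {-m,…,m}} f_{i₁,j₁} ∘ ⋯ ∘ f_{i_n,j_n}(T_ε)`. -/
def Gset (p : ℤ) (m : ℕ) (ε : ℝ) : List ℤ → Set (ℝ × ℝ)
  | [] => Tset p m ε
  | j :: w => ⋃ i ∈ Finset.Icc (-(m : ℤ)) (m : ℤ), fmap p ε i j '' Gset p m ε w


lemma geom_summable (q : ℝ) (hq : 2 ≤ q) : Summable (fun k : ℕ => (q ^ (k+1))⁻¹) := by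
  have h0 : (0:ℝ) < q := by linarith
  have h1 : q⁻¹ < 1 := by
    rw [inv_lt_one_iff₀]; right; linarith
  have h2 : (0:ℝ) ≤ q⁻¹ := by positivity
  have : Summable (fun k : ℕ => q⁻¹ * (q⁻¹) ^ k) :=
    (summable_geometric_of_lt_one h2 h1).mul_left _
  refine this.congr fun k => ?_
  rw [← inv_pow, pow_succ]
  ring

lemma geom_tsum (q : ℝ) (hq : 2 ≤ q) : ∑' k : ℕ, (q ^ (k+1))⁻¹ = (q - 1)⁻¹ := by
  have h0 : (0:ℝ) < q := by linarith
  have h1 : q⁻¹ < 1 := by rw [inv_lt_one_iff₀]; right; linarith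
  have h2 : (0:ℝ) ≤ q⁻¹ := by positivity
  have e : ∀ k : ℕ, (q ^ (k+1))⁻¹ = q⁻¹ * (q⁻¹) ^ k := by
    intro k; rw [← inv_pow, pow_succ]; ring
  rw [tsum_congr e, tsum_mul_left, tsum_geometric_of_lt_one h2 h1]
  have : q - 1 ≠ 0 := by linarith
  field_simp

lemma digits_summable (q : ℝ) (hq : 2 ≤ q) (c : ℕ → ℝ) (C : ℝ) (hc : ∀ k, |c k| ≤ C) :
    Summable (fun k : ℕ => (q ^ (k+1))⁻¹ * c k) := by
  have h0 : (0:ℝ) < q := by linarith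
  have hC : 0 ≤ C := le_trans (abs_nonneg _) (hc 0)
  refine Summable.of_norm (((geom_summable q hq).mul_left C).of_nonneg_of_le
    (fun k => norm_nonneg _) (fun k => ?_))
  rw [norm_mul, norm_inv, norm_pow]
  have : ‖q‖ = q := abs_of_pos h0
  rw [this]
  have h2 : (0:ℝ) ≤ (q ^ (k+1))⁻¹ := by positivity
  calc (q ^ (k+1))⁻¹ * ‖c k‖ ≤ (q ^ (k+1))⁻¹ * C := by
        exact mul_le_mul_of_nonneg_left (hc k) h2
    _ = C * (q ^ (k+1))⁻¹ := by ring

lemma digits_bound (q : ℝ) (hq : 2 ≤ q) (c : ℕ → ℝ) (C : ℝ) (hc : ∀ k, |c k| ≤ C) :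
    |∑' k : ℕ, (q ^ (k+1))⁻¹ * c k| ≤ C * (q - 1)⁻¹ := by
  have h0 : (0:ℝ) < q := by linarith
  have hsum := digits_summable q hq c C hc
  calc |∑' k : ℕ, (q ^ (k+1))⁻¹ * c k| ≤ ∑' k : ℕ, |(q ^ (k+1))⁻¹ * c k| := by
        have habs : (fun k : ℕ => ‖(q ^ (k+1))⁻¹ * c k‖)
            = fun k : ℕ => |(q ^ (k+1))⁻¹ * c k| := by funext k; rfl
        have := norm_tsum_le_tsum_norm (f := fun k : ℕ => (q ^ (k+1))⁻¹ * c k)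
          (by rw [habs]; exact hsum.abs)
        rw [habs] at this
        exact this
    _ ≤ ∑' k : ℕ, C * (q ^ (k+1))⁻¹ := by
        refine Summable.tsum_le_tsum (fun k => ?_) hsum.abs ((geom_summable q hq).mul_left C)
        rw [abs_mul, abs_inv, abs_pow, abs_of_pos h0]
        have h2 : (0:ℝ) ≤ (q ^ (k+1))⁻¹ := by positivity
        calc (q ^ (k+1))⁻¹ * |c k| ≤ (q ^ (k+1))⁻¹ * C :=
              mul_le_mul_of_nonneg_left (hc k) h2
          _ = C * (q ^ (k+1))⁻¹ := by ring
    _ = C * (q - 1)⁻¹ := by rw [tsum_mul_left, geom_tsum q hq]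

lemma digits_rigid (q : ℝ) (hq : 2 ≤ q) (c : ℕ → ℝ) (C : ℝ) (hub : ∀ k, c k ≤ C)
    (hlb : ∀ k, |c k| ≤ C)
    (heq : ∑' k : ℕ, (q ^ (k+1))⁻¹ * c k = C * (q - 1)⁻¹) : ∀ k, c k = C := by
  intro k
  have h0 : (0:ℝ) < q := by linarith
  have hsum := digits_summable q hq c C hlb
  have hsum2 : Summable (fun k : ℕ => (q ^ (k+1))⁻¹ * (C - c k)) := by
    have := ((geom_summable q hq).mul_right C).sub hsum
    refine this.congr fun k => ?_; ring
  have hzero : ∑' k : ℕ, (q ^ (k+1))⁻¹ * (C - c k) = 0 := by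
    have : (fun k : ℕ => (q ^ (k+1))⁻¹ * (C - c k))
        = fun k : ℕ => (q ^ (k+1))⁻¹ * C - (q ^ (k+1))⁻¹ * c k := by
      funext k; ring
    rw [this, Summable.tsum_sub ((geom_summable q hq).mul_right C) hsum, tsum_mul_right,
      geom_tsum q hq, heq]
    ring
  have hnn : ∀ j, 0 ≤ (q ^ (j+1))⁻¹ * (C - c j) := by
    intro j
    have : 0 ≤ C - c j := by linarith [hub j]
    positivity
  have hle := Summable.le_tsum hsum2 k (fun j _ => hnn j)
  rw [hzero] at hle
  have h1 : (q ^ (k+1))⁻¹ * (C - c k) = 0 := le_antisymm hle (hnn k)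
  have h2 : (q ^ (k+1))⁻¹ ≠ 0 := by positivity
  have := mul_eq_zero.mp h1
  rcases this with h | h
  · exact absurd h h2
  · linarith

lemma tsum_tail_const (q : ℝ) (hq : 2 ≤ q) (u : ℕ → ℝ) (C : ℝ) (hb : ∀ t, |u t| ≤ C)
    (n : ℕ) (c : ℝ) (hc : ∀ t, n < t → u t = c) :
    ∑' t : ℕ, (q ^ (t+1))⁻¹ * u t
      = (∑ t ∈ Finset.range n, (q ^ (t+1))⁻¹ * u t) + (q ^ (n+1))⁻¹ * u n
        + (q ^ (n+1))⁻¹ * (q - 1)⁻¹ * c := by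
  have h0 : (0:ℝ) < q := by linarith
  have hsum := digits_summable q hq u C hb
  rw [← Summable.sum_add_tsum_nat_add (n+1) hsum, Finset.sum_range_succ]
  have htail : ∑' t : ℕ, (q ^ (t + (n+1) + 1))⁻¹ * u (t + (n+1))
      = (q ^ (n+1))⁻¹ * (q - 1)⁻¹ * c := by
    have e : ∀ t : ℕ, (q ^ (t + (n+1) + 1))⁻¹ * u (t + (n+1))
        = ((q ^ (n+1))⁻¹ * c) * (q ^ (t+1))⁻¹ := by
      intro t
      rw [hc (t + (n+1)) (by omega)]
      rw [show t + (n+1) + 1 = (n+1) + (t+1) by omega, pow_add, mul_inv]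
      ring
    rw [tsum_congr e, tsum_mul_left, geom_tsum q hq]
    ring
  rw [htail]


lemma exists_digits (m : ℕ) (hm : 1 ≤ m) (q : ℝ) (hq : q = 2 * m + 1) (x : ℝ)
    (hx1 : -(1/2 : ℝ) ≤ x) (hx2 : x ≤ 1/2) :
    ∃ c : ℕ → ℤ, (∀ t, |c t| ≤ (m : ℤ)) ∧ ∑' t : ℕ, (q ^ (t+1))⁻¹ * (c t : ℝ) = x := by
  have hm1 : (1:ℝ) ≤ m := by exact_mod_cast hm
  have hq2 : (2:ℝ) ≤ q := by rw [hq]; linarith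
  have h0 : (0:ℝ) < q := by linarith
  rcases eq_or_lt_of_le hx2 with heq | hlt
  · -- x = 1/2 : take c = m constantly
    refine ⟨fun _ => (m : ℤ), fun t => by simp, ?_⟩
    have : ∀ t : ℕ, (q ^ (t+1))⁻¹ * ((m : ℤ) : ℝ) = (m : ℝ) * (q ^ (t+1))⁻¹ := by
      intro t; push_cast; ring
    rw [tsum_congr this, tsum_mul_left, geom_tsum q hq2, heq, hq,
      show (2:ℝ) * m + 1 - 1 = 2 * m by ring]
    have hm0 : (m:ℝ) ≠ 0 := by positivity
    field_simp
  · -- x < 1/2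
    set g : ℕ → ℤ := fun N => ⌊x * q ^ N + 1/2⌋ with hg
    set c : ℕ → ℤ := fun t => g (t+1) - (2 * m + 1) * g t with hc
    have hqZ : ((2 * (m:ℤ) + 1 : ℤ) : ℝ) = q := by rw [hq]; push_cast; ring
    -- bounds on g: g N ≤ x q^N + 1/2 < g N + 1
    have hgle : ∀ N, (g N : ℝ) ≤ x * q ^ N + 1/2 := fun N => Int.floor_le _
    have hglt : ∀ N, x * q ^ N + 1/2 < g N + 1 := fun N => Int.lt_floor_add_one _
    -- digit bounds
    have hcb : ∀ t, |c t| ≤ (m : ℤ) := by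
      intro t
      rw [abs_le]
      have key : c t = ⌊(x * q ^ (t+1) - q * g t) + 1/2⌋ := by
        have : (c t : ℤ) = ⌊x * q ^ (t+1) + 1/2⌋ - (2 * m + 1) * g t := rfl
        rw [this, ← Int.floor_sub_intCast]
        congr 1
        push_cast [← hqZ]
        ring
      have hps : q ^ (t+1) = q * q ^ t := by rw [pow_succ]; ring
      have hs1 : x * q ^ t - (g t : ℝ) < 1/2 := by linarith [hglt t]
      have hs2 : -(1/2 : ℝ) ≤ x * q ^ t - (g t : ℝ) := by linarith [hgle t]
      have e : x * q ^ (t+1) - q * (g t : ℝ) = q * (x * q ^ t - (g t : ℝ)) := by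
        rw [hps]; ring
      have hδ1 : -(q/2) ≤ x * q ^ (t+1) - q * (g t : ℝ) := by
        rw [e]
        nlinarith [mul_nonneg (le_of_lt h0) (show (0:ℝ) ≤ (x * q ^ t - (g t : ℝ)) + 1/2 by linarith)]
      have hδ2 : x * q ^ (t+1) - q * (g t : ℝ) < q/2 := by
        rw [e]
        nlinarith [mul_pos h0 (show (0:ℝ) < 1/2 - (x * q ^ t - (g t : ℝ)) by linarith)]
      constructor
      · rw [key, Int.le_floor]
        push_cast
        rw [hq] at hδ1 ⊢
        linarith
      · rw [key]
        have : ⌊(x * q ^ (t+1) - q * g t) + 1/2⌋ < (m : ℤ) + 1 := by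
          rw [Int.floor_lt]
          push_cast
          rw [hq] at hδ2 ⊢
          linarith
        omega
    refine ⟨c, hcb, ?_⟩
    -- partial sums telescope
    have hg0 : g 0 = 0 := by
      rw [hg]
      simp only [pow_zero, mul_one]
      rw [Int.floor_eq_zero_iff]
      constructor <;> simp <;> linarith
    have hstep : ∀ t : ℕ, (q ^ (t+1))⁻¹ * ((c t : ℤ) : ℝ)
        = (g (t+1) : ℝ) / q ^ (t+1) - (g t : ℝ) / q ^ t := by
      intro t
      have hne : (q : ℝ) ^ (t+1) ≠ 0 := by positivity
      have hne2 : (q : ℝ) ^ t ≠ 0 := by positivity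
      have : ((c t : ℤ) : ℝ) = (g (t+1) : ℝ) - q * (g t : ℝ) := by
        push_cast [hc, ← hqZ]
        ring
      rw [this]
      field_simp
      rw [pow_succ]
      ring
    have hpartial : ∀ N : ℕ, ∑ t ∈ Finset.range N, (q ^ (t+1))⁻¹ * ((c t : ℤ) : ℝ)
        = (g N : ℝ) / q ^ N := by
      intro N
      have := Finset.sum_range_sub (fun t => (g t : ℝ) / q ^ t) N
      rw [Finset.sum_congr rfl (fun t _ => hstep t), this, hg0]
      simp
    -- convergence
    have hsum : Summable (fun t : ℕ => (q ^ (t+1))⁻¹ * ((c t : ℤ) : ℝ)) := by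
      refine digits_summable q hq2 _ (m : ℝ) (fun t => ?_)
      have := hcb t
      rw [abs_le] at this ⊢
      constructor <;> [exact_mod_cast this.1; exact_mod_cast this.2]
    have htend : Filter.Tendsto (fun N => (g N : ℝ) / q ^ N) Filter.atTop (nhds x) := by
      have hdiff : ∀ N, ‖(g N : ℝ) / q ^ N - x‖ ≤ (1/2) * (q⁻¹) ^ N := by
        intro N
        have hqN : (0:ℝ) < q ^ N := by positivity
        have h1 := hgle N
        have h2 := hglt N
        have e : (g N : ℝ)/q^N - x = ((g N : ℝ) - x * q^N) / q^N := by
          field_simp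
        rw [Real.norm_eq_abs, e, abs_div, abs_of_pos hqN]
        have habs : |(g N : ℝ) - x * q^N| ≤ 1/2 := by
          rw [abs_le]; constructor <;> linarith
        calc |(g N : ℝ) - x * q^N| / q^N ≤ (1/2) / q^N := by gcongr
          _ = 1/2 * (q⁻¹)^N := by rw [inv_pow]; ring
      have hgeo : Filter.Tendsto (fun N : ℕ => (1/2 : ℝ) * (q⁻¹) ^ N) Filter.atTop (nhds 0) := by
        have h1 : |q⁻¹| < 1 := by
          rw [abs_of_pos (by positivity)]
          rw [inv_lt_one_iff₀]; right; linarith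
        have := tendsto_pow_atTop_nhds_zero_of_abs_lt_one h1
        have := this.const_mul (1/2 : ℝ)
        simpa using this
      have := squeeze_zero_norm hdiff hgeo
      have h2 := this.add_const x
      simpa using h2
    have := hsum.hasSum.tendsto_sum_nat
    rw [funext hpartial] at this
    exact tendsto_nhds_unique this htend


lemma bshift_abs_le (ε : ℝ) (j : ℤ) : |bshift ε j| ≤ |ε| := by
  unfold bshift; split <;> simp [abs_nonneg]

lemma int_abs_cast_le (a : ℤ) (m : ℕ) (h : |a| ≤ (m:ℤ)) : |(a:ℝ)| ≤ (m:ℝ) := by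
  have : ((|a| : ℤ) : ℝ) ≤ ((m:ℤ):ℝ) := by exact_mod_cast h
  rw [Int.cast_abs] at this
  exact_mod_cast this

lemma mix_abs_le (ε : ℝ) (m : ℕ) (a b : ℤ) (ha : |a| ≤ (m:ℤ)) :
    |(a:ℝ) + bshift ε b| ≤ (m:ℝ) + |ε| :=
  le_trans (abs_add_le _ _) (add_le_add (int_abs_cast_le a m ha) (bshift_abs_le ε b))

lemma head_tail (q : ℝ) (hq : 2 ≤ q) (u : ℕ → ℝ) (C : ℝ) (hb : ∀ t, |u t| ≤ C) :
    ∑' t : ℕ, (q ^ (t+1))⁻¹ * u t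
      = ((∑' t : ℕ, (q ^ (t+1))⁻¹ * u (t+1)) + u 0) / q := by
  have h0 : (0:ℝ) < q := by linarith
  have hsum := digits_summable q hq u C hb
  rw [Summable.tsum_eq_zero_add hsum]
  have e : ∀ t : ℕ, (q ^ (t+1+1))⁻¹ * u (t+1) = q⁻¹ * ((q ^ (t+1))⁻¹ * u (t+1)) := by
    intro t
    rw [show t+1+1 = (t+1)+1 from rfl, pow_succ, mul_inv]
    ring
  rw [tsum_congr e, tsum_mul_left]
  have hne : q ≠ 0 := ne_of_gt h0
  field_simp
  ring

def consSeq (a : ℤ) (f : ℕ → ℤ) : ℕ → ℤ := fun t => match t with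
  | 0 => a
  | s+1 => f s

@[simp] lemma consSeq_zero (a : ℤ) (f : ℕ → ℤ) : consSeq a f 0 = a := rfl
@[simp] lemma consSeq_succ (a : ℤ) (f : ℕ → ℤ) (s : ℕ) : consSeq a f (s+1) = f s := rfl

lemma gset_mem (p : ℤ) (m : ℕ) (ε : ℝ) (hm : 1 ≤ m) (hp : p = 2*(m:ℤ)+1) (w : List ℤ)
    (hwb : ∀ x ∈ w, |x| ≤ (m:ℤ)) (z : ℝ × ℝ) :
    z ∈ Gset p m ε w ↔ ∃ i j : ℕ → ℤ, (∀ t, |i t| ≤ (m:ℤ)) ∧ (∀ t, |j t| ≤ (m:ℤ)) ∧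
      (∀ t, ∀ ht : t < w.length, j t = w[t]) ∧
      z.1 = ∑' t : ℕ, ((p:ℝ) ^ (t+1))⁻¹ * ((i t : ℝ) + bshift ε (j t)) ∧
      z.2 = ∑' t : ℕ, ((p:ℝ) ^ (t+1))⁻¹ * (j t : ℝ) := by
  have hq2 : (2:ℝ) ≤ (p:ℝ) := by
    have h3 : (3:ℤ) ≤ p := by omega
    have : (3:ℝ) ≤ (p:ℝ) := by exact_mod_cast h3
    linarith
  induction w generalizing z with
  | nil =>
    simp only [Gset, Tset, Set.mem_setOf_eq, List.length_nil]
    constructor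
    · rintro ⟨i, j, hi, hj, h1, h2⟩
      exact ⟨i, j, hi, hj, fun t ht => absurd ht (by omega), h1, h2⟩
    · rintro ⟨i, j, hi, hj, _, h1, h2⟩
      exact ⟨i, j, hi, hj, h1, h2⟩
  | cons a w ih =>
    have ha : |a| ≤ (m:ℤ) := hwb a (by simp)
    have hwb' : ∀ x ∈ w, |x| ≤ (m:ℤ) := fun x hx => hwb x (by simp [hx])
    simp only [Gset, Set.mem_iUnion, Set.mem_image, Finset.mem_Icc]
    constructor
    · rintro ⟨i0, hi0, z', hz', rfl⟩
      obtain ⟨i, j, hi, hj, hpre, h1, h2⟩ := (ih hwb' z').mp hz'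
      have hi0' : |i0| ≤ (m:ℤ) := abs_le.mpr hi0
      refine ⟨consSeq i0 i, consSeq a j, ?_, ?_, ?_, ?_, ?_⟩
      · intro t; cases t with
        | zero => simpa using hi0'
        | succ s => simpa using hi s
      · intro t; cases t with
        | zero => simpa using ha
        | succ s => simpa using hj s
      · intro t ht
        cases t with
        | zero => simp
        | succ s =>
          simp only [consSeq_succ, List.getElem_cons_succ]
          exact hpre s (by simpa using ht)
      · show (z'.1 + (i0:ℝ) + bshift ε a) / (p:ℝ) = _
        rw [head_tail (p:ℝ) hq2 _ ((m:ℝ) + |ε|)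
          (fun t => mix_abs_le ε m _ _ (by cases t with
            | zero => simpa using hi0'
            | succ s => simpa using hi s))]
        simp only [consSeq_succ, consSeq_zero]
        rw [← h1]
        ring
      · show (z'.2 + (a:ℝ)) / (p:ℝ) = _
        rw [head_tail (p:ℝ) hq2 _ (m:ℝ)
          (fun t => int_abs_cast_le _ m (by cases t with
            | zero => simpa using ha
            | succ s => simpa using hj s))]
        simp only [consSeq_succ, consSeq_zero]
        rw [← h2]
    · rintro ⟨i, j, hi, hj, hpre, h1, h2⟩
      have hj0 : j 0 = a := by
        have := hpre 0 (by simp)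
        simpa using this
      refine ⟨i 0, abs_le.mp (hi 0),
        (∑' t : ℕ, ((p:ℝ) ^ (t+1))⁻¹ * ((i (t+1) : ℝ) + bshift ε (j (t+1))),
         ∑' t : ℕ, ((p:ℝ) ^ (t+1))⁻¹ * ((j (t+1) : ℝ))), ?_, ?_⟩
      · refine (ih hwb' _).mpr ?_
        refine ⟨fun t => i (t+1), fun t => j (t+1), fun t => hi _, fun t => hj _, ?_, rfl, rfl⟩
        intro t ht
        have := hpre (t+1) (by simpa using Nat.succ_lt_succ ht)
        simpa using this
      · subst hj0
        unfold fmap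
        have e1 : ∑' t : ℕ, ((p:ℝ) ^ (t+1))⁻¹ * ((i t : ℝ) + bshift ε (j t))
            = ((∑' t : ℕ, ((p:ℝ) ^ (t+1))⁻¹ * ((i (t+1) : ℝ) + bshift ε (j (t+1))))
              + ((i 0 : ℝ) + bshift ε (j 0))) / (p:ℝ) :=
          head_tail (p:ℝ) hq2 (fun t => (i t : ℝ) + bshift ε (j t)) ((m:ℝ) + |ε|)
            (fun t => mix_abs_le ε m _ _ (hi t))
        have e2 : ∑' t : ℕ, ((p:ℝ) ^ (t+1))⁻¹ * ((j t : ℝ))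
            = ((∑' t : ℕ, ((p:ℝ) ^ (t+1))⁻¹ * ((j (t+1) : ℝ))) + (j 0 : ℝ)) / (p:ℝ) :=
          head_tail (p:ℝ) hq2 (fun t => (j t : ℝ)) (m:ℝ)
            (fun t => int_abs_cast_le _ m (hj t))
        refine Prod.ext ?_ ?_
        · show (_ + ((i 0 : ℤ) : ℝ) + bshift ε (j 0)) / (p:ℝ) = z.1
          rw [h1, e1]
          ring
        · show (_ + ((j 0 : ℤ) : ℝ)) / (p:ℝ) = z.2
          rw [h2, e2]


/-- prefix sums -/
def Cw (q : ℝ) (w : List ℤ) : ℝ :=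
  ∑ t ∈ Finset.range w.length, (q ^ (t+1))⁻¹ * ((w.getD t 0 : ℤ) : ℝ)

def Dw (q ε : ℝ) (w : List ℤ) : ℝ :=
  ∑ t ∈ Finset.range w.length, (q ^ (t+1))⁻¹ * bshift ε (w.getD t 0)

def Yv (q : ℝ) (w : List ℤ) (a τ : ℤ) : ℝ :=
  Cw q w + (q ^ (w.length+1))⁻¹ * (a : ℝ) + (q ^ (w.length+1))⁻¹ * (q - 1)⁻¹ * (τ : ℝ)

def Xv (q ε : ℝ) (w : List ℤ) (a τ : ℤ) : ℝ :=
  Dw q ε w + (q ^ (w.length+1))⁻¹ * bshift ε a + (q ^ (w.length+1))⁻¹ * (q - 1)⁻¹ * bshift ε τ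

lemma bshift_neg (ε : ℝ) (a : ℤ) : bshift ε (-a) = bshift ε a := by
  unfold bshift
  simp [odd_neg]

lemma mem_concat (p : ℤ) (m : ℕ) (ε : ℝ) (hm : 1 ≤ m) (hp : p = 2*(m:ℤ)+1)
    (w : List ℤ) (hw : ∀ x ∈ w, |x| ≤ (m:ℤ)) (a τ : ℤ) (ha : |a| ≤ (m:ℤ))
    (hτ : |τ| ≤ (m:ℤ)) (z : ℝ × ℝ)
    (hz2 : z.2 = Yv (p:ℝ) w a τ)
    (hz1 : |z.1 - Xv (p:ℝ) ε w a τ| ≤ 1/2) :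
    z ∈ Gset p m ε (w ++ [a]) := by
  set q : ℝ := (p:ℝ) with hqdef
  set n := w.length with hn
  have hq : q = 2 * (m:ℝ) + 1 := by rw [hqdef, hp]; push_cast; ring
  have hm1 : (1:ℝ) ≤ (m:ℝ) := by exact_mod_cast hm
  have hq2 : (2:ℝ) ≤ q := by rw [hq]; linarith
  have hwb : ∀ x ∈ w ++ [a], |x| ≤ (m:ℤ) := by
    intro x hx
    rcases List.mem_append.mp hx with h | h
    · exact hw x h
    · rw [List.mem_singleton.mp h]; exact ha
  rw [abs_le] at hz1
  obtain ⟨c, hc, hcsum⟩ := exists_digits m hm q hq (z.1 - Xv q ε w a τ)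
    (by linarith [hz1.1]) (by linarith [hz1.2])
  set jseq : ℕ → ℤ := fun t => if t < n then w.getD t 0 else if t = n then a else τ
    with hjseq
  have hgetD : ∀ t, t < n → |w.getD t 0| ≤ (m:ℤ) := by
    intro t ht
    rw [List.getD_eq_getElem w 0 (by omega)]
    exact hw _ (List.getElem_mem _)
  have hjb : ∀ t, |jseq t| ≤ (m:ℤ) := by
    intro t
    simp only [hjseq]
    split
    · exact hgetD t (by assumption)
    · split
      · exact ha
      · exact hτ
  have hjtail : ∀ t, n < t → jseq t = τ := by
    intro t ht
    simp only [hjseq]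
    rw [if_neg (by omega), if_neg (by omega)]
  have hjn : jseq n = a := by simp [hjseq]
  -- second coordinate tsum
  have hz2sum : ∑' t : ℕ, (q ^ (t+1))⁻¹ * ((jseq t : ℤ) : ℝ) = Yv q w a τ := by
    rw [tsum_tail_const q hq2 _ (m:ℝ) (fun t => int_abs_cast_le _ m (hjb t)) n
      ((τ : ℤ) : ℝ) (fun t ht => by rw [hjtail t ht])]
    unfold Yv Cw
    rw [hjn]
    congr 1
    congr 1
    apply Finset.sum_congr rfl
    intro t ht
    have : jseq t = w.getD t 0 := by
      simp only [hjseq]; rw [if_pos (Finset.mem_range.mp ht)]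
    rw [this]
  -- first coordinate: bshift part
  have hbsum : ∑' t : ℕ, (q ^ (t+1))⁻¹ * bshift ε (jseq t) = Xv q ε w a τ := by
    rw [tsum_tail_const q hq2 _ |ε| (fun t => bshift_abs_le ε _) n
      (bshift ε τ) (fun t ht => by rw [hjtail t ht])]
    unfold Xv Dw
    rw [hjn]
    congr 1
    congr 1
    apply Finset.sum_congr rfl
    intro t ht
    have : jseq t = w.getD t 0 := by
      simp only [hjseq]; rw [if_pos (Finset.mem_range.mp ht)]
    rw [this]
  rw [gset_mem p m ε hm hp _ hwb z]
  refine ⟨c, jseq, hc, hjb, ?_, ?_, ?_⟩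
  · intro t ht
    rw [List.length_append, List.length_singleton] at ht
    rcases Nat.lt_or_ge t n with h | h
    · rw [List.getElem_append_left (by omega)]
      simp only [hjseq]
      rw [if_pos h, List.getD_eq_getElem w 0 (by omega)]
    · have htn : t = n := by omega
      subst htn
      rw [List.getElem_concat_length rfl]
      exact hjn
  · have hsplit : ∀ t : ℕ, (q ^ (t+1))⁻¹ * ((c t : ℝ) + bshift ε (jseq t))
        = (q ^ (t+1))⁻¹ * (c t : ℝ) + (q ^ (t+1))⁻¹ * bshift ε (jseq t) := by
      intro t; ring
    rw [tsum_congr hsplit, Summable.tsum_add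
      (digits_summable q hq2 _ (m:ℝ) (fun t => int_abs_cast_le _ m (hc t)))
      (digits_summable q hq2 _ |ε| (fun t => bshift_abs_le ε _)),
      hcsum, hbsum]
    ring
  · rw [hz2sum, hz2]

lemma inter_forward (p : ℤ) (m : ℕ) (ε : ℝ) (hm : 1 ≤ m) (hp : p = 2*(m:ℤ)+1)
    (w : List ℤ) (hw : ∀ x ∈ w, |x| ≤ (m:ℤ)) (k l : ℤ) (hk : |k| ≤ (m:ℤ))
    (hl : |l| ≤ (m:ℤ)) (hkl : k = l + 1) (z : ℝ × ℝ)
    (hz : z ∈ Gset p m ε (w ++ [k]) ∩ Gset p m ε (w ++ [l])) :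
    z.2 = Yv (p:ℝ) w k (-(m:ℤ)) ∧ |z.1 - Xv (p:ℝ) ε w k (-(m:ℤ))| ≤ 1/2
      ∧ |z.1 - Xv (p:ℝ) ε w l (m:ℤ)| ≤ 1/2 := by
  set q : ℝ := (p:ℝ) with hqdef
  set n := w.length with hn
  have hq : q = 2 * (m:ℝ) + 1 := by rw [hqdef, hp]; push_cast; ring
  have hm1 : (1:ℝ) ≤ (m:ℝ) := by exact_mod_cast hm
  have hq2 : (2:ℝ) ≤ q := by rw [hq]; linarith
  have hq1 : q - 1 = 2 * (m:ℝ) := by rw [hq]; ring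
  have hm0 : (m:ℝ) ≠ 0 := by positivity
  have hqn0 : (q ^ (n+1))⁻¹ ≠ 0 := by positivity
  have hwbk : ∀ x ∈ w ++ [k], |x| ≤ (m:ℤ) := by
    intro x hx
    rcases List.mem_append.mp hx with h | h
    · exact hw x h
    · rw [List.mem_singleton.mp h]; exact hk
  have hwbl : ∀ x ∈ w ++ [l], |x| ≤ (m:ℤ) := by
    intro x hx
    rcases List.mem_append.mp hx with h | h
    · exact hw x h
    · rw [List.mem_singleton.mp h]; exact hl
  obtain ⟨i, j, hi, hj, hpre, h1, h2⟩ := (gset_mem p m ε hm hp _ hwbk z).mp hz.1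
  obtain ⟨i', j', hi', hj', hpre', h1', h2'⟩ := (gset_mem p m ε hm hp _ hwbl z).mp hz.2
  have hlen : (w ++ [k]).length = n + 1 := by simp [hn]
  have hlen' : (w ++ [l]).length = n + 1 := by simp [hn]
  have hjn : j n = k := by
    have := hpre n (by omega)
    rwa [List.getElem_concat_length rfl] at this
  have hjn' : j' n = l := by
    have := hpre' n (by omega)
    rwa [List.getElem_concat_length rfl] at this
  have hjw : ∀ t, t < n → j t = w.getD t 0 := by
    intro t ht
    have := hpre t (by omega)
    rwa [List.getElem_append_left (by omega), ← List.getD_eq_getElem w 0 (by omega)] at this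
  have hjw' : ∀ t, t < n → j' t = w.getD t 0 := by
    intro t ht
    have := hpre' t (by omega)
    rwa [List.getElem_append_left (by omega), ← List.getD_eq_getElem w 0 (by omega)] at this
  have sj := digits_summable q hq2 (fun t => ((j t : ℤ) : ℝ)) (m:ℝ)
    (fun t => int_abs_cast_le _ m (hj t))
  have sj' := digits_summable q hq2 (fun t => ((j' t : ℤ) : ℝ)) (m:ℝ)
    (fun t => int_abs_cast_le _ m (hj' t))
  set d : ℕ → ℝ := fun t => ((j' t : ℤ) : ℝ) - ((j t : ℤ) : ℝ) with hd
  have hdb : ∀ t, |d t| ≤ 2 * (m:ℝ) := by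
    intro t
    have h1 := int_abs_cast_le _ m (hj t)
    have h2 := int_abs_cast_le _ m (hj' t)
    calc |d t| ≤ |((j' t : ℤ) : ℝ)| + |((j t : ℤ) : ℝ)| := abs_sub _ _
      _ ≤ 2 * (m:ℝ) := by linarith
  have sd := digits_summable q hq2 d (2*(m:ℝ)) hdb
  have hdsum : ∑' t : ℕ, (q ^ (t+1))⁻¹ * d t = 0 := by
    have e : ∀ t : ℕ, (q ^ (t+1))⁻¹ * d t
        = (q ^ (t+1))⁻¹ * ((j' t : ℤ) : ℝ) - (q ^ (t+1))⁻¹ * ((j t : ℤ) : ℝ) := by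
      intro t; simp only [hd]; ring
    rw [tsum_congr e, Summable.tsum_sub sj' sj, ← h2', ← h2, sub_self]
  have hsplit := Summable.sum_add_tsum_nat_add (f := fun t => (q ^ (t+1))⁻¹ * d t) (n+1) sd
  rw [hdsum] at hsplit
  have hhead : ∑ t ∈ Finset.range (n+1), (q ^ (t+1))⁻¹ * d t = -(q ^ (n+1))⁻¹ := by
    rw [Finset.sum_range_succ]
    have hzero : ∑ t ∈ Finset.range n, (q ^ (t+1))⁻¹ * d t = 0 := by
      apply Finset.sum_eq_zero
      intro t ht
      have ht' := Finset.mem_range.mp ht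
      have : d t = 0 := by
        simp only [hd]
        rw [hjw t ht', hjw' t ht']
        ring
      rw [this, mul_zero]
    rw [hzero, zero_add]
    have : d n = -1 := by
      simp only [hd]
      rw [hjn, hjn', hkl]
      push_cast
      ring
    rw [this]
    ring
  rw [hhead] at hsplit
  have htailsum : ∑' t : ℕ, (q ^ (t+1))⁻¹ * d (t+(n+1)) = 2*(m:ℝ) * (q-1)⁻¹ := by
    have e : ∀ t : ℕ, (q ^ (t+(n+1)+1))⁻¹ * d (t+(n+1))
        = (q ^ (n+1))⁻¹ * ((q ^ (t+1))⁻¹ * d (t+(n+1))) := by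
      intro t
      rw [show t+(n+1)+1 = (n+1)+(t+1) by omega, pow_add, mul_inv]
      ring
    rw [tsum_congr e, tsum_mul_left] at hsplit
    have h1 : (q ^ (n+1))⁻¹ * (∑' t : ℕ, (q ^ (t+1))⁻¹ * d (t+(n+1))) = (q ^ (n+1))⁻¹ * 1 := by
      rw [mul_one]; linarith
    have h2 := mul_left_cancel₀ hqn0 h1
    rw [h2, hq1]
    field_simp
  have hrigid := digits_rigid q hq2 (fun t => d (t+(n+1))) (2*(m:ℝ))
    (fun t => (abs_le.mp (hdb _)).2) (fun t => hdb _) htailsum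
  have htails : ∀ s, n < s → j s = -(m:ℤ) ∧ j' s = (m:ℤ) := by
    intro s hs
    have := hrigid (s - (n+1))
    rw [show s - (n+1) + (n+1) = s by omega] at this
    simp only [hd] at this
    have hz : (j' s : ℤ) - j s = 2 * (m:ℤ) := by exact_mod_cast this
    have b1 := abs_le.mp (hj s)
    have b2 := abs_le.mp (hj' s)
    omega
  have hy : z.2 = Yv q w k (-(m:ℤ)) := by
    rw [h2, tsum_tail_const q hq2 _ (m:ℝ) (fun t => int_abs_cast_le _ m (hj t)) n
      (((-(m:ℤ) : ℤ)) : ℝ) (fun t ht => by rw [(htails t ht).1])]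
    unfold Yv Cw
    rw [hjn]
    rw [← hn]
    congr 1
    congr 1
    apply Finset.sum_congr rfl
    intro t ht
    rw [hjw t (Finset.mem_range.mp ht)]
  refine ⟨hy, ?_, ?_⟩
  · have hb : ∑' t : ℕ, (q ^ (t+1))⁻¹ * bshift ε (j t) = Xv q ε w k (-(m:ℤ)) := by
      rw [tsum_tail_const q hq2 _ |ε| (fun t => bshift_abs_le ε _) n
        (bshift ε (-(m:ℤ))) (fun t ht => by rw [(htails t ht).1])]
      unfold Xv Dw
      rw [hjn, ← hn]
      congr 1
      congr 1
      apply Finset.sum_congr rfl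
      intro t ht
      rw [hjw t (Finset.mem_range.mp ht)]
    have hx1 : z.1 = (∑' t : ℕ, (q ^ (t+1))⁻¹ * ((i t : ℤ) : ℝ)) + Xv q ε w k (-(m:ℤ)) := by
      rw [h1, ← hb, ← Summable.tsum_add
        (digits_summable q hq2 _ (m:ℝ) (fun t => int_abs_cast_le _ m (hi t)))
        (digits_summable q hq2 _ |ε| (fun t => bshift_abs_le ε _))]
      apply tsum_congr
      intro t; ring
    rw [hx1]
    have := digits_bound q hq2 (fun t => ((i t : ℤ) : ℝ)) (m:ℝ)
      (fun t => int_abs_cast_le _ m (hi t))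
    rw [hq1] at this
    have hval : (m:ℝ) * (2*(m:ℝ))⁻¹ = 1/2 := by field_simp
    rw [hval] at this
    simpa using this
  · have hb : ∑' t : ℕ, (q ^ (t+1))⁻¹ * bshift ε (j' t) = Xv q ε w l ((m:ℤ)) := by
      rw [tsum_tail_const q hq2 _ |ε| (fun t => bshift_abs_le ε _) n
        (bshift ε ((m:ℤ))) (fun t ht => by rw [(htails t ht).2])]
      unfold Xv Dw
      rw [hjn', ← hn]
      congr 1
      congr 1
      apply Finset.sum_congr rfl
      intro t ht
      rw [hjw' t (Finset.mem_range.mp ht)]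
    have hx1 : z.1 = (∑' t : ℕ, (q ^ (t+1))⁻¹ * ((i' t : ℤ) : ℝ)) + Xv q ε w l ((m:ℤ)) := by
      rw [h1', ← hb, ← Summable.tsum_add
        (digits_summable q hq2 _ (m:ℝ) (fun t => int_abs_cast_le _ m (hi' t)))
        (digits_summable q hq2 _ |ε| (fun t => bshift_abs_le ε _))]
      apply tsum_congr
      intro t; ring
    rw [hx1]
    have := digits_bound q hq2 (fun t => ((i' t : ℤ) : ℝ)) (m:ℝ)
      (fun t => int_abs_cast_le _ m (hi' t))
    rw [hq1] at this
    have hval : (m:ℝ) * (2*(m:ℝ))⁻¹ = 1/2 := by field_simp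
    rw [hval] at this
    simpa using this

lemma yv_eq (q : ℝ) (m : ℕ) (hm0 : (m:ℝ) ≠ 0) (hq1 : q - 1 = 2 * (m:ℝ))
    (w : List ℤ) (k l : ℤ) (hkl : k = l + 1) :
    Yv q w l ((m:ℤ)) = Yv q w k (-(m:ℤ)) := by
  unfold Yv
  rw [hq1, hkl]
  push_cast
  have key : ((2:ℝ) * (m:ℝ))⁻¹ * (m:ℝ) = 1/2 := by
    field_simp
  linear_combination (2 * (q ^ (w.length+1))⁻¹) * key

lemma inter_char (p : ℤ) (m : ℕ) (ε : ℝ) (hm : 1 ≤ m) (hp : p = 2*(m:ℤ)+1)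
    (w : List ℤ) (hw : ∀ x ∈ w, |x| ≤ (m:ℤ)) (k l : ℤ) (hk : |k| ≤ (m:ℤ))
    (hl : |l| ≤ (m:ℤ)) (hkl : k = l + 1) (z : ℝ × ℝ) :
    z ∈ Gset p m ε (w ++ [k]) ∩ Gset p m ε (w ++ [l]) ↔
      (z.2 = Yv (p:ℝ) w k (-(m:ℤ)) ∧ |z.1 - Xv (p:ℝ) ε w k (-(m:ℤ))| ≤ 1/2
        ∧ |z.1 - Xv (p:ℝ) ε w l (m:ℤ)| ≤ 1/2) := by
  have hm1 : (1:ℝ) ≤ (m:ℝ) := by exact_mod_cast hm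
  have hm0 : (m:ℝ) ≠ 0 := by positivity
  have hq1 : (p:ℝ) - 1 = 2 * (m:ℝ) := by rw [hp]; push_cast; ring
  have hmm : |(-(m:ℤ))| ≤ (m:ℤ) := by simp
  have hmm' : |((m:ℤ))| ≤ (m:ℤ) := by simp
  constructor
  · exact inter_forward p m ε hm hp w hw k l hk hl hkl z
  · rintro ⟨h2, hA, hB⟩
    constructor
    · exact mem_concat p m ε hm hp w hw k (-(m:ℤ)) hk hmm z h2 hA
    · refine mem_concat p m ε hm hp w hw l ((m:ℤ)) hl hmm' z ?_ hB
      rw [h2, ← yv_eq (p:ℝ) m hm0 hq1 w k l hkl]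

lemma seg_char (a b y0 : ℝ) (hab : a ≤ b) :
    segment ℝ ((a, y0) : ℝ × ℝ) ((b, y0) : ℝ × ℝ)
      = {z : ℝ × ℝ | z.2 = y0 ∧ a ≤ z.1 ∧ z.1 ≤ b} := by
  ext z
  constructor
  · rintro ⟨s, t, hs, ht, hst, heq⟩
    have h1 : z.1 = s * a + t * b := by
      rw [← heq]; simp [Prod.smul_def, smul_eq_mul]
    have h2 : z.2 = s * y0 + t * y0 := by
      rw [← heq]; simp [Prod.smul_def, smul_eq_mul]
    have hsa : s * a = a - t * a := by rw [show s = 1 - t by linarith]; ring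
    have htb : t * b = b - s * b := by rw [show t = 1 - s by linarith]; ring
    refine ⟨by rw [h2, ← add_mul, hst, one_mul],
      by rw [h1]; linarith [mul_nonneg ht (sub_nonneg.mpr hab), hsa],
      by rw [h1]; linarith [mul_nonneg hs (sub_nonneg.mpr hab), htb]⟩
  · rintro ⟨h2, hA, hB⟩
    rcases eq_or_lt_of_le hab with heq | hlt
    · refine ⟨1, 0, by norm_num, le_refl 0, by norm_num, ?_⟩
      have hz1 : z.1 = a := by rw [← heq] at hB; linarith
      have : z = ((a, y0) : ℝ × ℝ) := Prod.ext hz1 h2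
      rw [this]
      simp
    · have hne : b - a ≠ 0 := by linarith
      refine ⟨(b - z.1)/(b-a), (z.1 - a)/(b-a), div_nonneg (by linarith) (by linarith),
        div_nonneg (by linarith) (by linarith), ?_, ?_⟩
      · field_simp
        ring
      · refine Prod.ext ?_ ?_
        · show (b - z.1)/(b-a) * a + (z.1 - a)/(b-a) * b = z.1
          field_simp
          ring
        · show (b - z.1)/(b-a) * y0 + (z.1 - a)/(b-a) * y0 = z.2
          rw [h2]
          field_simp
          ring

lemma main_aux (m : ℕ) (hm : 1 ≤ m) (p : ℤ) (hp : p = 2 * (m : ℤ) + 1) (ε : ℝ)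
    (w : List ℤ) (hw : ∀ j ∈ w, |j| ≤ (m : ℤ)) (k l : ℤ) (hk : |k| ≤ (m : ℤ))
    (hl : |l| ≤ (m : ℤ)) (hkl : k = l + 1) :
    (∃ u v : ℝ × ℝ, u ≠ v ∧ Gset p m ε (w ++ [k]) ∩ Gset p m ε (w ++ [l]) = segment ℝ u v)
      ↔ |ε| < (p : ℝ) ^ (w.length + 1) := by
  set q : ℝ := (p:ℝ) with hqdef
  set n := w.length with hn
  have hq : q = 2 * (m:ℝ) + 1 := by rw [hqdef, hp]; push_cast; ring
  have hm1 : (1:ℝ) ≤ (m:ℝ) := by exact_mod_cast hm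
  have hq2 : (2:ℝ) ≤ q := by rw [hq]; linarith
  have hq0 : (0:ℝ) < q := by linarith
  have hqn : (0:ℝ) < q ^ (n+1) := by positivity
  set Xk := Xv q ε w k (-(m:ℤ)) with hXk
  set Xl := Xv q ε w l ((m:ℤ)) with hXl
  set Y0 := Yv q w k (-(m:ℤ)) with hY0
  have hchar := inter_char p m ε hm hp w hw k l hk hl hkl
  have hdiff : Xk - Xl = (q ^ (n+1))⁻¹ * (bshift ε k - bshift ε l) := by
    rw [hXk, hXl]
    unfold Xv
    rw [bshift_neg, ← hn]
    ring
  have hbkl : |bshift ε k - bshift ε l| = |ε| := by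
    rcases Int.even_or_odd l with he | ho
    · have h1 : ¬ Odd l := by simp [Int.not_odd_iff_even.mpr he]
      have h2 : Odd k := by rw [hkl]; exact Even.add_one he
      unfold bshift
      rw [if_pos h2, if_neg h1]
      simp
    · have h1 : Odd l := ho
      have hek : Even k := by rw [hkl]; exact Odd.add_one ho
      have h2 : ¬ Odd k := Int.not_odd_iff_even.mpr hek
      unfold bshift
      rw [if_neg h2, if_pos h1]
      simp
  have habs : |Xk - Xl| = (q ^ (n+1))⁻¹ * |ε| := by
    rw [hdiff, abs_mul, hbkl, abs_of_pos (by positivity)]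
  constructor
  · rintro ⟨u, v, huv, heq⟩
    by_contra hge
    push_neg at hge
    have h1 : (1:ℝ) ≤ |Xk - Xl| := by
      rw [habs]
      calc (1:ℝ) = (q ^ (n+1))⁻¹ * q ^ (n+1) := by field_simp
        _ ≤ (q ^ (n+1))⁻¹ * |ε| := by
            apply mul_le_mul_of_nonneg_left hge (by positivity)
    have hu : u ∈ Gset p m ε (w ++ [k]) ∩ Gset p m ε (w ++ [l]) := by
      rw [heq]; exact left_mem_segment ℝ u v
    have hv : v ∈ Gset p m ε (w ++ [k]) ∩ Gset p m ε (w ++ [l]) := by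
      rw [heq]; exact right_mem_segment ℝ u v
    obtain ⟨hu2, huA, huB⟩ := (hchar u).mp hu
    obtain ⟨hv2, hvA, hvB⟩ := (hchar v).mp hv
    rw [abs_le] at huA huB hvA hvB
    apply huv
    refine Prod.ext ?_ (by rw [hu2, hv2])
    rcases le_total Xk Xl with h | h
    · rw [abs_of_nonpos (by linarith)] at h1
      linarith [huA.1, huA.2, huB.1, huB.2, hvA.1, hvA.2, hvB.1, hvB.2]
    · rw [abs_of_nonneg (by linarith)] at h1
      linarith [huA.1, huA.2, huB.1, huB.2, hvA.1, hvA.2, hvB.1, hvB.2]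
  · intro hlt
    have hlt1 : |Xk - Xl| < 1 := by
      rw [habs]
      calc (q ^ (n+1))⁻¹ * |ε| < (q ^ (n+1))⁻¹ * q ^ (n+1) := by
            apply mul_lt_mul_of_pos_left hlt (by positivity)
        _ = 1 := by field_simp
    obtain ⟨hs1, hs2⟩ := abs_sub_lt_iff.mp hlt1
    set a := max Xk Xl - 1/2 with hadef
    set b := min Xk Xl + 1/2 with hbdef
    have hab : a < b := by
      rcases le_total Xk Xl with h | h
      · rw [hadef, hbdef, max_eq_right h, min_eq_left h]; linarith
      · rw [hadef, hbdef, max_eq_left h, min_eq_right h]; linarith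
    refine ⟨(a, Y0), (b, Y0), ?_, ?_⟩
    · intro hcon
      rw [Prod.mk.injEq] at hcon
      linarith [hcon.1]
    · rw [seg_char a b Y0 (le_of_lt hab)]
      ext z
      rw [hchar z]
      simp only [Set.mem_setOf_eq]
      constructor
      · rintro ⟨h2, hA, hB⟩
        rw [abs_le] at hA hB
        refine ⟨h2, ?_, ?_⟩
        · have := max_le (show Xk ≤ z.1 + 1/2 by linarith [hA.1])
            (show Xl ≤ z.1 + 1/2 by linarith [hB.1])
          rw [hadef]; linarith
        · have := le_min (show z.1 - 1/2 ≤ Xk by linarith [hA.2])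
            (show z.1 - 1/2 ≤ Xl by linarith [hB.2])
          rw [hbdef]; linarith
      · rintro ⟨h2, hA, hB⟩
        rw [hadef] at hA
        rw [hbdef] at hB
        have m1 := le_max_left Xk Xl
        have m2 := le_max_right Xk Xl
        have m3 := min_le_left Xk Xl
        have m4 := min_le_right Xk Xl
        exact ⟨h2, abs_le.mpr ⟨by linarith, by linarith⟩, abs_le.mpr ⟨by linarith, by linarith⟩⟩



/-- if `|k - ℓ| = 1` then `G_{j₁⋯j_n k} ∩ G_{j₁⋯j_n ℓ}` is a nondegenerate
line segment if and only if `|ε| < p^(n+1)`. -/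
theorem stmt5 (m : ℕ) (hm : 1 ≤ m) (p : ℤ) (hp : p = 2 * (m : ℤ) + 1) (ε : ℝ)
    (n : ℕ) (hn : 1 ≤ n) (w : List ℤ) (hwlen : w.length = n)
    (hw : ∀ j ∈ w, |j| ≤ (m : ℤ)) (k l : ℤ) (hk : |k| ≤ (m : ℤ)) (hl : |l| ≤ (m : ℤ))
    (hkl : |k - l| = 1) :
    (∃ u v : ℝ × ℝ, u ≠ v ∧ Gset p m ε (w ++ [k]) ∩ Gset p m ε (w ++ [l]) = segment ℝ u v)
      ↔ |ε| < (p : ℝ) ^ (n + 1) := by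
  have hcase : k = l + 1 ∨ l = k + 1 := by
    have := (abs_eq (by norm_num : (0:ℤ) ≤ 1)).mp hkl
    omega
  subst hwlen
  rcases hcase with h | h
  · exact main_aux m hm p hp ε w hw k l hk hl h
  · rw [Set.inter_comm]
    exact main_aux m hm p hp ε w hw l k hl hk h
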